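/- Let L > 0, ε > 0 and C₀ > 0. Let μ be a finite positive Borel measure on ℝ² supported on the vertical segment { (0, t) : −ε ≤ t ≤ L + ε } such that μ(B(z̄, r)) ≤ C₀ r for all z̄ ∈ ℝ² and r > 0 (linear growth), and such that ∫ P(z̄ − w̄) dμ(w̄) ≤ 2 for every z̄ ∈ ℝ². Then μ = 0. (Consequently, vertical segments have zero 1/2-fractional caloric capacity, while they have positive analytic capacity; so analytic capacity is not comparable to γ^{1/2}_Θ.) -/

import Mathlib

open MeasureTheory
open scoped ENNReal

/-- The planar (N = 1) 1/2-fractional heat kernel: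
`P(x,t) = t/(t² + x²)` for `t > 0`, else `0`. -/
noncomputable def P1 (x t : ℝ) : ℝ := if 0 < t then t / (t ^ 2 + x ^ 2) else 0

lemma inv_lintegral_top {c : ℝ} (hc : 0 < c) :
    (∫⁻ t in Set.Ioc (0:ℝ) c, ENNReal.ofReal t⁻¹) = ∞ := by
  by_contra h
  have hfin : (∫⁻ t in Set.Ioc (0:ℝ) c, ENNReal.ofReal t⁻¹) < ∞ := lt_top_iff_ne_top.2 h
  have hnn : 0 ≤ᵐ[volume.restrict (Set.Ioc (0:ℝ) c)] fun t : ℝ => t⁻¹ :=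
    (ae_restrict_iff' measurableSet_Ioc).2 (Filter.Eventually.of_forall fun t ht =>
      inv_nonneg.2 ht.1.le)
  have hint : IntegrableOn (fun t : ℝ => t⁻¹) (Set.Ioc (0:ℝ) c) :=
    ⟨measurable_inv.aestronglyMeasurable, (hasFiniteIntegral_iff_ofReal hnn).2 hfin⟩
  have hint2 : IntegrableOn (fun t : ℝ => t ^ (-1 : ℝ)) (Set.Ioo (0:ℝ) c) := by
    refine ((hint.mono_set Set.Ioo_subset_Ioc_self).congr_fun ?_ measurableSet_Ioo)
    intro t ht
    simp [Real.rpow_neg_one]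
  have := (intervalIntegral.integrableOn_Ioo_rpow_iff hc).1 hint2
  linarith

theorem stmt16 (L ε C₀ : ℝ) (hL : 0 < L) (hε : 0 < ε) (hC : 0 < C₀)
    (μ : Measure (ℝ × ℝ)) (hfin : IsFiniteMeasure μ)
    (hsupp : μ {w : ℝ × ℝ | w.1 = 0 ∧ w.2 ∈ Set.Icc (-ε) (L + ε)}ᶜ = 0)
    (hgrowth : ∀ (z : ℝ × ℝ) (r : ℝ), 0 < r →
      μ {w : ℝ × ℝ | Real.sqrt ((z.1 - w.1) ^ 2 + (z.2 - w.2) ^ 2) < r} ≤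
        ENNReal.ofReal (C₀ * r))
    (hpot : ∀ z : ℝ × ℝ,
      (∫⁻ w : ℝ × ℝ, ENNReal.ofReal (P1 (z.1 - w.1) (z.2 - w.2)) ∂μ) ≤ 2) :
    μ = 0 := by
  set S := {w : ℝ × ℝ | w.1 = 0 ∧ w.2 ∈ Set.Icc (-ε) (L + ε)} with hS
  set I := Set.Ioc (-ε) (L + 2 * ε) with hI
  -- measurability of the kernel
  have hP1 : Measurable fun p : ℝ × ℝ => P1 p.1 p.2 := by
    unfold P1
    exact Measurable.ite (measurableSet_lt measurable_const measurable_snd)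
      (measurable_snd.div ((measurable_snd.pow_const 2).add (measurable_fst.pow_const 2)))
      measurable_const
  have hmeas : Measurable fun p : (ℝ × ℝ) × ℝ =>
      ENNReal.ofReal (P1 (0 - p.1.1) (p.2 - p.1.2)) := by
    apply ENNReal.measurable_ofReal.comp
    exact hP1.comp ((measurable_const.sub (measurable_fst.comp measurable_fst)).prodMk
      (measurable_snd.sub (measurable_snd.comp measurable_fst)))
  -- upper bound via Fubini and the potential bound
  have key : (∫⁻ w, (∫⁻ s in I, ENNReal.ofReal (P1 (0 - w.1) (s - w.2))) ∂μ) ≤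
      2 * volume I := by
    rw [lintegral_lintegral_swap hmeas.aemeasurable]
    calc (∫⁻ s in I, ∫⁻ w, ENNReal.ofReal (P1 (0 - w.1) (s - w.2)) ∂μ)
        ≤ ∫⁻ _ in I, (2 : ℝ≥0∞) := by
          refine lintegral_mono fun s => ?_
          simpa using hpot (0, s)
      _ = 2 * volume I := by simp [lintegral_const, mul_comm]
  -- lower bound: inner integral is infinite on the support
  have hinner : ∀ w ∈ S, (∫⁻ s in I, ENNReal.ofReal (P1 (0 - w.1) (s - w.2))) = ∞ := by
    rintro w ⟨hw1, hw2⟩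
    have hcalc : ∀ s : ℝ, ENNReal.ofReal (P1 (0 - w.1) (s - w.2)) =
        ENNReal.ofReal ((s - w.2)⁻¹) := by
      intro s
      rw [hw1]
      unfold P1
      rcases lt_or_ge 0 (s - w.2) with h | h
      · rw [if_pos h]
        congr 1
        rw [show ((0:ℝ) - 0) ^ 2 = 0 by norm_num, add_zero, sq, div_self_mul_self']
      · rw [if_neg (not_lt.2 h), ENNReal.ofReal_zero,
          eq_comm, ENNReal.ofReal_eq_zero]
        exact inv_nonpos.2 (by linarith)
    simp_rw [hcalc]
    refine top_le_iff.1 ?_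
    have hc : 0 < L + 2 * ε - w.2 := by
      have := hw2.2
      simp only [Set.mem_Icc] at hw2
      linarith [hw2.2]
    have htrans : (∫⁻ t in Set.Ioc (0:ℝ) (L + 2 * ε - w.2), ENNReal.ofReal t⁻¹) =
        ∫⁻ s in Set.Ioc w.2 (L + 2 * ε), ENNReal.ofReal ((s - w.2)⁻¹) := by
      have := (measurePreserving_add_right (volume : Measure ℝ) w.2).setLIntegral_comp_emb
        (measurableEmbedding_addRight w.2)
        (fun s => ENNReal.ofReal ((s - w.2)⁻¹)) (Set.Ioc (0:ℝ) (L + 2 * ε - w.2))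
      simpa [Set.image_add_const_Ioc, add_sub_cancel_right] using this
    have hsub : Set.Ioc w.2 (L + 2 * ε) ⊆ I := by
      apply Set.Ioc_subset_Ioc_left
      simp only [Set.mem_Icc] at hw2
      linarith [hw2.1]
    calc (⊤ : ℝ≥0∞) = ∫⁻ t in Set.Ioc (0:ℝ) (L + 2 * ε - w.2), ENNReal.ofReal t⁻¹ :=
          (inv_lintegral_top hc).symm
      _ = ∫⁻ s in Set.Ioc w.2 (L + 2 * ε), ENNReal.ofReal ((s - w.2)⁻¹) := htrans
      _ ≤ ∫⁻ s in I, ENNReal.ofReal ((s - w.2)⁻¹) := lintegral_mono_set hsub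
  -- conclusion
  have hae : ∀ᵐ w ∂μ, w ∈ S := by
    rw [ae_iff]
    exact hsupp
  have heq : (∫⁻ w, (∫⁻ s in I, ENNReal.ofReal (P1 (0 - w.1) (s - w.2))) ∂μ) =
      ∞ * μ Set.univ := by
    rw [show (∞ * μ Set.univ : ℝ≥0∞) = ∫⁻ _, (∞ : ℝ≥0∞) ∂μ by simp [lintegral_const]]
    exact lintegral_congr_ae (hae.mono fun w hw => hinner w hw)
  rw [heq] at key
  have hvol : 2 * volume I < ∞ := by
    rw [hI]
    simp [Real.volume_Ioc]
    exact ENNReal.mul_lt_top (by norm_num) ENNReal.ofReal_lt_top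
  have : μ Set.univ = 0 := by
    by_contra hne
    rw [ENNReal.top_mul hne] at key
    exact absurd (top_le_iff.1 key) hvol.ne
  exact Measure.measure_univ_eq_zero.1 this
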